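/- Let q be a self-join-free Boolean conjunctive query, θ a valuation over a subset of vars(q), and F ∈ q an atom such that F attacks no variable of dom(θ) in q. Then for every variable v ∈ vars(q) \ dom(θ): F attacks v in q if and only if θ(F) attacks v in θ(q). -/

import Mathlib

open scoped Classical

/-! ## Variables, constants, relation names -/

abbrev Var : Type := ℕ
abbrev RelName : Type := ℕ

/-- A term: a variable or a constant (a non-negative rational). -/
inductive Trm : Type where
  | var : Var → Trm
  | const : ℚ≥0 → Trm
deriving DecidableEq

/-- An atom `R(x̲, y)`: relation name, primary-key arguments, remaining arguments. -/
structure DBAtom : Type where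
  rel : RelName
  keyArgs : List Trm
  nonkeyArgs : List Trm
deriving DecidableEq, Inhabited

/-- A fact: an atom without variables. -/
structure DBFact : Type where
  rel : RelName
  keyArgs : List ℚ≥0
  nonkeyArgs : List ℚ≥0
deriving DecidableEq

def Trm.var? : Trm → Option Var
  | .var v => some v
  | .const _ => none

def Trm.const? : Trm → Option ℚ≥0
  | .var _ => none
  | .const c => some c

def DBAtom.keyVars (F : DBAtom) : Finset Var := (F.keyArgs.filterMap Trm.var?).toFinset

def DBAtom.allVars (F : DBAtom) : Finset Var :=
  ((F.keyArgs ++ F.nonkeyArgs).filterMap Trm.var?).toFinset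

def DBAtom.notkeyVars (F : DBAtom) : Finset Var := F.allVars \ F.keyVars

def qVars (q : List DBAtom) : Finset Var := q.foldr (fun F s => F.allVars ∪ s) ∅

/-- Self-join-free: pairwise distinct relation names. -/
def SelfJoinFree (q : List DBAtom) : Prop := (q.map DBAtom.rel).Nodup

def KeyEqual (f g : DBFact) : Prop := f.rel = g.rel ∧ f.keyArgs = g.keyArgs

def DBConsistent (s : Finset DBFact) : Prop :=
  ∀ f ∈ s, ∀ g ∈ s, KeyEqual f g → f = g

/-- A repair: an inclusion-maximal consistent subset. -/
def IsRepair (db r : Finset DBFact) : Prop :=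
  r ⊆ db ∧ DBConsistent r ∧
    ∀ s : Finset DBFact, r ⊆ s → s ⊆ db → DBConsistent s → s = r

/-! ## Valuations (partial maps from variables to constants) -/

abbrev Assignment : Type := Var → Option ℚ≥0

def Assignment.Dom (θ : Assignment) : Set Var := {v | θ v ≠ none}

def Assignment.ExtendsA (μ θ : Assignment) : Prop :=
  ∀ (v : Var) (c : ℚ≥0), θ v = some c → μ v = some c

noncomputable def Assignment.restrict (θ : Assignment) (S : Set Var) : Assignment :=
  fun v => if v ∈ S then θ v else none

def emptyAssignment : Assignment := fun _ => none

/-- Combination of two valuations (the first takes precedence). -/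
def Assignment.comb (θ μ : Assignment) : Assignment :=
  fun v => (θ v).orElse (fun _ => μ v)

def applyTrm (θ : Assignment) : Trm → Trm
  | .var v => (θ v).elim (Trm.var v) Trm.const
  | .const c => .const c

def applyAtom (θ : Assignment) (F : DBAtom) : DBAtom :=
  ⟨F.rel, F.keyArgs.map (applyTrm θ), F.nonkeyArgs.map (applyTrm θ)⟩

def applyQ (θ : Assignment) (q : List DBAtom) : List DBAtom := q.map (applyAtom θ)

def DBAtom.toFact? (F : DBAtom) : Option DBFact := do
  let ks ← F.keyArgs.mapM Trm.const?
  let ns ← F.nonkeyArgs.mapM Trm.const?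
  pure (DBFact.mk F.rel ks ns)

def AtomIn (s : Finset DBFact) (F : DBAtom) : Prop := ∃ f ∈ s, F.toFact? = some f

/-- `(s, θ) ⊨ q`: θ extends to a valuation over dom(θ) ∪ vars(q) mapping all atoms of q into s. -/
def Entails (s : Finset DBFact) (θ : Assignment) (q : List DBAtom) : Prop :=
  ∃ μ : Assignment, μ.Dom = θ.Dom ∪ ↑(qVars q) ∧ μ.ExtendsA θ ∧
    ∀ F ∈ q, AtomIn s (applyAtom μ F)

/-! ## Functional dependencies -/

def FDSatT (N : Set (Var → ℚ≥0)) (X Y : Finset Var) : Prop :=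
  ∀ t₁ ∈ N, ∀ t₂ ∈ N, (∀ x ∈ X, t₁ x = t₂ x) → ∀ y ∈ Y, t₁ y = t₂ y

/-- Standard logical implication of functional dependencies. -/
def FDImp (fds : Set (Finset Var × Finset Var)) (X Y : Finset Var) : Prop :=
  ∀ N : Set (Var → ℚ≥0), (∀ fd ∈ fds, FDSatT N fd.1 fd.2) → FDSatT N X Y

def FDSet (q : List DBAtom) : Set (Finset Var × Finset Var) :=
  {p | ∃ F ∈ q, p = (F.keyVars, F.allVars)}

def keycl (F : DBAtom) (q : List DBAtom) : Set Var :=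
  {x | x ∈ qVars q ∧ FDImp (FDSet (q.erase F)) F.keyVars {x}}

/-! ## Attacks and the attack graph -/

def AdjIn (q : List DBAtom) (a b : Var) : Prop :=
  ∃ G ∈ q, a ∈ G.allVars ∧ b ∈ G.allVars

/-- Atom F attacks variable x in q. -/
def AttacksVar (q : List DBAtom) (F : DBAtom) (x : Var) : Prop :=
  ∃ l : List Var, (∀ v ∈ l, v ∉ keycl F q) ∧
    (∃ h, l.head? = some h ∧ h ∈ F.notkeyVars) ∧
    l.getLast? = some x ∧ l.Chain' (AdjIn q)

def AttacksAtom (q : List DBAtom) (F G : DBAtom) : Prop :=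
  ∃ x ∈ G.allVars, AttacksVar q F x

def Unattacked (q : List DBAtom) (v : Var) : Prop := ∀ F ∈ q, ¬ AttacksVar q F v

/-- The list order of q is a topological sort of its (hence acyclic) attack graph. -/
def IsTopoSort (q : List DBAtom) : Prop :=
  ∀ i j : Fin q.length, q.get i ≠ q.get j →
    AttacksAtom q (q.get i) (q.get j) → (i : ℕ) < (j : ℕ)

/-! ## Embeddings and ∀embeddings (relative to the list order as topological sort) -/

def uVars (q : List DBAtom) (ℓ : ℕ) : Finset Var := qVars (q.take ℓ)

def headKey : List DBAtom → Finset Var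
  | [] => ∅
  | F :: _ => F.keyVars

/-- ℓ-embedding of q in db. -/
def IsLEmb (q : List DBAtom) (db : Finset DBFact) (ℓ : ℕ) (θ : Assignment) : Prop :=
  θ.Dom = ↑(uVars q ℓ) ∧ Entails db θ q

/-- ℓ-∀embedding of q in db. -/
def IsForallEmb (q : List DBAtom) (db : Finset DBFact) : ℕ → Assignment → Prop
  | 0, θ => IsLEmb q db 0 θ ∧ ∀ r, IsRepair db r → Entails r emptyAssignment q
  | (ℓ + 1), θ =>
      IsLEmb q db (ℓ + 1) θ ∧
      (∀ r, IsRepair db r →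
        Entails r (θ.restrict (↑(uVars q ℓ) ∪ ↑(headKey (q.drop ℓ)))) (q.drop ℓ)) ∧
      IsForallEmb q db ℓ (θ.restrict ↑(uVars q ℓ))

/-- An embedding of q in s: a valuation over vars(q) mapping all atoms of q into s. -/
def IsEmbedding (q : List DBAtom) (s : Finset DBFact) (θ : Assignment) : Prop :=
  θ.Dom = ↑(qVars q) ∧ ∀ F ∈ q, AtomIn s (applyAtom θ F)

/-- Superfrugal repair: every embedding of q in r is a ∀embedding of q in db. -/
def Superfrugal (q : List DBAtom) (db r : Finset DBFact) : Prop :=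
  IsRepair db r ∧ ∀ θ, IsEmbedding q r θ → IsForallEmb q db q.length θ

/-! ## FD satisfaction by sets of valuations; maximal consistent subsets (MCS) -/

def AgreeOn (θ₁ θ₂ : Assignment) (X : Finset Var) : Prop := ∀ x ∈ X, θ₁ x = θ₂ x

def SatFD (N : Set Assignment) (X Y : Finset Var) : Prop :=
  ∀ θ₁ ∈ N, ∀ θ₂ ∈ N, AgreeOn θ₁ θ₂ X → AgreeOn θ₁ θ₂ Y

def SatFDs (N : Set Assignment) (q : List DBAtom) : Prop :=
  ∀ fd ∈ FDSet q, SatFD N fd.1 fd.2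

/-- Maximal consistent subset of a set M of embeddings. -/
def IsMCS (q : List DBAtom) (M N : Set Assignment) : Prop :=
  N ⊆ M ∧ SatFDs N q ∧ ∀ N', N ⊆ N' → N' ⊆ M → SatFDs N' q → N' = N

/-! ## Aggregate operators -/

structure AggOp : Type where
  app : Multiset ℚ≥0 → ℚ
  nonneg : ∀ X : Multiset ℚ≥0, X ≠ 0 → 0 ≤ app X

noncomputable def AggOp.appNN (A : AggOp) (X : Multiset ℚ≥0) : ℚ≥0 := (A.app X).toNNRat

def AggOp.Assoc (A : AggOp) : Prop :=
  ∀ X Y : Multiset ℚ≥0, X ≠ 0 → A.app (X + Y) = A.app (A.appNN X ::ₘ Y)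

def AggOp.Mono (A : AggOp) : Prop :=
  ∀ x x' : List ℚ≥0, x ≠ [] → List.Forall₂ (· ≤ ·) x x' →
    ∀ Y : Multiset ℚ≥0, A.app ↑x ≤ A.app (↑x' + Y)

def evalTrm (θ : Assignment) : Trm → ℚ≥0
  | .var v => (θ v).getD 0
  | .const c => c

/-- The multiset of r-values over a (finite) set of valuations. -/
noncomputable def valsOf (N : Set Assignment) (r : Trm) : Multiset ℚ≥0 :=
  if h : N.Finite then h.toFinset.val.map (fun θ => evalTrm θ r) else 0

/-- Primitive numerical term: a (numerical) variable of the query, or a constant. -/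
def PrimTerm (q : List DBAtom) (r : Trm) : Prop :=
  (∃ v, r = Trm.var v ∧ v ∈ qVars q) ∨ (∃ c, r = Trm.const c)

/-! ## Branches and ∀key-embeddings -/

/-- γ is a branch of the ℓ-∀embedding θ. -/
def IsBranch (q : List DBAtom) (db : Finset DBFact) (ℓ : ℕ) (θ γ : Assignment) : Prop :=
  γ.ExtendsA θ ∧
  (∀ v ∈ γ.Dom \ θ.Dom, Unattacked (applyQ θ (q.drop ℓ)) v) ∧
  (∃ μ, IsForallEmb q db q.length μ ∧ μ.ExtendsA γ)

/-- γ is an (ℓ+1)-∀key-embedding: a branch of θ with domain dom(θ) ∪ key(F_{ℓ+1}). -/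
def IsKeyEmb (q : List DBAtom) (db : Finset DBFact) (ℓ : ℕ) (θ γ : Assignment) : Prop :=
  IsBranch q db ℓ θ γ ∧ γ.Dom = θ.Dom ∪ ↑(headKey (q.drop ℓ))

/-- M(θ): all ∀embeddings of q in db extending θ. -/
def Mset (q : List DBAtom) (db : Finset DBFact) (θ : Assignment) : Set Assignment :=
  {μ | IsForallEmb q db q.length μ ∧ μ.ExtendsA θ}

/-! ## Weakly connected components of the attack graph -/

def UndirectedEdge (p : List DBAtom) (F G : DBAtom) : Prop :=
  F ∈ p ∧ G ∈ p ∧ (AttacksAtom p F G ∨ AttacksAtom p G F)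

/-- S is a maximal weakly connected component of the attack graph of p. -/
def IsWCC (p : List DBAtom) (S : Set DBAtom) : Prop :=
  ∃ F₀ ∈ p, S = {G | Relation.ReflTransGen (UndirectedEdge p) F₀ G}

/-! ## rifi, sequential proofs, n-minimality -/

/-- rifi(q, s, V): valuations over V extending to a valuation over vars(q) mapping q into s. -/
def rifi (q : List DBAtom) (s : Finset DBFact) (V : Finset Var) : Set Assignment :=
  {θ | θ.Dom = ↑V ∧ ∃ μ : Assignment, μ.Dom = ↑(qVars q) ∧ μ.ExtendsA θ ∧
      ∀ F ∈ q, AtomIn s (applyAtom μ F)}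

/-- A sequential proof of FD(p) ⊨ Z → w. -/
def IsSeqProof (p : List DBAtom) (Z : Finset Var) (w : Var) (l : List DBAtom) : Prop :=
  (∀ F ∈ l, F ∈ p) ∧
  (∀ i : Fin l.length, (l.get i).keyVars ⊆ Z ∪ qVars (l.take i.1)) ∧
  w ∈ Z ∪ qVars l

/-- n-minimal repair (with X = vars(q)). -/
def NMinimal (q : List DBAtom) (db r : Finset DBFact) : Prop :=
  IsRepair db r ∧
  ¬ ∃ s : Finset DBFact, IsRepair db s ∧
      (∀ θ, IsEmbedding q s θ → IsEmbedding q r θ) ∧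
      (∃ μ, IsEmbedding q r μ ∧ ¬ IsEmbedding q s μ)

/-! ## Descending chains for aggregate operators -/

def DescChain {α β : Type*} [LT β] (F : Multiset α → β) (s t : α) : Prop :=
  ∀ i : ℕ, F (s ::ₘ Multiset.replicate (i + 1) t) < F (s ::ₘ Multiset.replicate i t)

def BoundedBy {α β : Type*} [LT β] (F : Multiset α → β) (s t : α) (m : ℕ → α) : Prop :=
  ∀ i j : ℕ, 1 ≤ j → ∀ k' k : ℕ, k' ≤ k → k ≤ i →
    F (s ::ₘ Multiset.replicate k' t) <
      F (Multiset.replicate j (m i) + (s ::ₘ Multiset.replicate k t))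

def HasBoundedDescChain {α β : Type*} [LT β] (F : Multiset α → β) : Prop :=
  ∃ s t, DescChain F s t ∧ ∃ m : ℕ → α, BoundedBy F s t m

/-! ### Auxiliary development for stmt5 -/

section Stmt5Aux

lemma varQ_plain (s : Trm) (v : Var) : s.var? = some v ↔ s = Trm.var v := by
  cases s <;> simp [Trm.var?]

lemma varQ_apply (θ : Assignment) (s : Trm) (v : Var) :
    (applyTrm θ s).var? = some v ↔ s = Trm.var v ∧ θ v = none := by
  cases s with
  | var w =>
    cases h : θ w with
    | none =>
      simp only [applyTrm, h, Option.elim, Trm.var?, Option.some.injEq, Trm.var.injEq]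
      constructor
      · rintro rfl; exact ⟨rfl, h⟩
      · rintro ⟨rfl, _⟩; rfl
    | some c =>
      simp only [applyTrm, h, Option.elim, Trm.var?]
      constructor
      · intro hc; exact absurd hc (by simp)
      · rintro ⟨he, hn⟩; injection he with he; subst he; rw [h] at hn; exact absurd hn (by simp)
  | const c => simp [applyTrm, Trm.var?]

lemma mem_varsList (θ : Assignment) (l : List Trm) (v : Var) :
    v ∈ (l.map (applyTrm θ)).filterMap Trm.var? ↔ Trm.var v ∈ l ∧ θ v = none := by
  simp only [List.mem_filterMap, List.mem_map]
  constructor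
  · rintro ⟨t, ⟨s, hs, rfl⟩, ht⟩
    rcases (varQ_apply θ s v).mp ht with ⟨rfl, hn⟩
    exact ⟨hs, hn⟩
  · rintro ⟨hs, hn⟩
    exact ⟨applyTrm θ (Trm.var v), ⟨Trm.var v, hs, rfl⟩, (varQ_apply θ _ v).mpr ⟨rfl, hn⟩⟩

lemma mem_varsList_plain (l : List Trm) (v : Var) :
    v ∈ l.filterMap Trm.var? ↔ Trm.var v ∈ l := by
  simp only [List.mem_filterMap]
  constructor
  · rintro ⟨t, ht, hv⟩; rwa [(varQ_plain t v).mp hv] at ht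
  · intro h; exact ⟨Trm.var v, h, rfl⟩

lemma mem_keyVars_apply (θ : Assignment) (F : DBAtom) (v : Var) :
    v ∈ (applyAtom θ F).keyVars ↔ v ∈ F.keyVars ∧ θ v = none := by
  simp only [DBAtom.keyVars, applyAtom, List.mem_toFinset]
  rw [mem_varsList, mem_varsList_plain]

lemma mem_allVars_apply (θ : Assignment) (F : DBAtom) (v : Var) :
    v ∈ (applyAtom θ F).allVars ↔ v ∈ F.allVars ∧ θ v = none := by
  simp only [DBAtom.allVars, applyAtom, List.mem_toFinset, ← List.map_append]
  rw [mem_varsList, mem_varsList_plain]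

lemma mem_notkeyVars_apply (θ : Assignment) (F : DBAtom) (v : Var) :
    v ∈ (applyAtom θ F).notkeyVars ↔ v ∈ F.notkeyVars ∧ θ v = none := by
  simp only [DBAtom.notkeyVars, Finset.mem_sdiff, mem_allVars_apply, mem_keyVars_apply]
  tauto

lemma keyVars_subset_allVars (F : DBAtom) : F.keyVars ⊆ F.allVars := by
  intro v hv
  simp only [DBAtom.keyVars, DBAtom.allVars, List.mem_toFinset] at *
  rcases List.mem_filterMap.mp hv with ⟨t, ht, hv⟩
  exact List.mem_filterMap.mpr ⟨t, List.mem_append_left _ ht, hv⟩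

lemma notkeyVars_subset_allVars (F : DBAtom) : F.notkeyVars ⊆ F.allVars := by
  intro v hv; exact (Finset.mem_sdiff.mp hv).1

lemma mem_qVars (q : List DBAtom) (v : Var) :
    v ∈ qVars q ↔ ∃ G ∈ q, v ∈ G.allVars := by
  induction q with
  | nil => simp [qVars]
  | cons a t ih => simp [qVars, Finset.mem_union, ih.symm]

lemma mem_qVars_apply (θ : Assignment) (q : List DBAtom) (v : Var) :
    v ∈ qVars (applyQ θ q) ↔ v ∈ qVars q ∧ θ v = none := by
  simp only [mem_qVars, applyQ, List.mem_map]
  constructor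
  · rintro ⟨G', ⟨G, hG, rfl⟩, hv⟩
    rcases (mem_allVars_apply θ G v).mp hv with ⟨h1, h2⟩
    exact ⟨⟨G, hG, h1⟩, h2⟩
  · rintro ⟨⟨G, hG, hv⟩, hn⟩
    exact ⟨applyAtom θ G, ⟨G, hG, rfl⟩, (mem_allVars_apply θ G v).mpr ⟨hv, hn⟩⟩

lemma rel_applyAtom (θ : Assignment) (G : DBAtom) : (applyAtom θ G).rel = G.rel := rfl

lemma nodup_of_sjf {q : List DBAtom} (h : SelfJoinFree q) : q.Nodup :=
  h.of_map DBAtom.rel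

lemma sjf_apply {q : List DBAtom} (θ : Assignment) (h : SelfJoinFree q) :
    SelfJoinFree (applyQ θ q) := by
  unfold SelfJoinFree applyQ at *
  rw [List.map_map]
  exact h

lemma apply_inj {q : List DBAtom} (hsjf : SelfJoinFree q) (θ : Assignment)
    {G H : DBAtom} (hG : G ∈ q) (hH : H ∈ q) (he : applyAtom θ G = applyAtom θ H) :
    G = H := by
  have : G.rel = H.rel := by rw [← rel_applyAtom θ G, ← rel_applyAtom θ H, he]
  exact List.inj_on_of_nodup_map hsjf hG hH this

lemma mem_apply_erase {q : List DBAtom} (hsjf : SelfJoinFree q) (θ : Assignment)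
    {F : DBAtom} (hF : F ∈ q) (G' : DBAtom) :
    G' ∈ (applyQ θ q).erase (applyAtom θ F) ↔
      ∃ G, G ∈ q ∧ G ≠ F ∧ G' = applyAtom θ G := by
  rw [(nodup_of_sjf (sjf_apply θ hsjf)).mem_erase_iff]
  constructor
  · rintro ⟨hne, hmem⟩
    rcases List.mem_map.mp hmem with ⟨G, hG, rfl⟩
    exact ⟨G, hG, fun h => hne (by rw [h]), rfl⟩
  · rintro ⟨G, hG, hne, rfl⟩
    exact ⟨fun h => hne (apply_inj hsjf θ hG hF h), List.mem_map.mpr ⟨G, hG, rfl⟩⟩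

lemma mem_erase_iff_of_sjf {q : List DBAtom} (hsjf : SelfJoinFree q) {F G : DBAtom} :
    G ∈ q.erase F ↔ G ≠ F ∧ G ∈ q :=
  (nodup_of_sjf hsjf).mem_erase_iff

/-- Syntactic closure of a variable set under the FDs of a query. -/
inductive InCl (p : List DBAtom) (X : Finset Var) : Var → Prop
  | base {v : Var} : v ∈ X → InCl p X v
  | step {v : Var} (G : DBAtom) : G ∈ p → (∀ k ∈ G.keyVars, InCl p X k) →
      v ∈ G.allVars → InCl p X v

lemma fdimp_iff (p : List DBAtom) (X : Finset Var) (x : Var) :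
    FDImp (FDSet p) X {x} ↔ InCl p X x := by
  constructor
  · intro h
    by_contra hx
    classical
    set t0 : Var → ℚ≥0 := fun _ => 0 with ht0
    set t1 : Var → ℚ≥0 := fun z => if InCl p X z then 0 else 1 with ht1
    have key : ∀ z : Var, t0 z = t1 z ↔ InCl p X z := by
      intro z
      constructor
      · intro hz
        by_contra hc
        simp only [ht0, ht1, if_neg hc] at hz
        exact one_ne_zero hz.symm
      · intro hz; simp [ht0, ht1, if_pos hz]
    have hsat : ∀ fd ∈ FDSet p, FDSatT {t0, t1} fd.1 fd.2 := by
      rintro fd ⟨G, hG, rfl⟩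
      intro s1 hs1 s2 hs2 hag y hy
      have hcase : ∀ a b : Var → ℚ≥0, a ∈ ({t0, t1} : Set (Var → ℚ≥0)) →
          b ∈ ({t0, t1} : Set (Var → ℚ≥0)) → a = b ∨ (a = t0 ∧ b = t1) ∨ (a = t1 ∧ b = t0) := by
        rintro a b (rfl | rfl) (rfl | rfl) <;> tauto
      rcases hcase s1 s2 hs1 hs2 with rfl | ⟨rfl, rfl⟩ | ⟨rfl, rfl⟩
      · rfl
      · have hkeys : ∀ k ∈ G.keyVars, InCl p X k := fun k hk => (key k).mp (hag k hk)
        exact (key y).mpr (InCl.step G hG hkeys hy)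
      · have hkeys : ∀ k ∈ G.keyVars, InCl p X k := fun k hk => (key k).mp (hag k hk).symm
        exact ((key y).mpr (InCl.step G hG hkeys hy)).symm
    have hag : ∀ z ∈ X, t0 z = t1 z := fun z hz => (key z).mpr (InCl.base hz)
    have := h {t0, t1} hsat t0 (Or.inl rfl) t1 (Or.inr rfl) hag x (Finset.mem_singleton_self x)
    exact hx ((key x).mp this)
  · intro h N hN s1 h1 s2 h2 hag y hy
    rw [Finset.mem_singleton] at hy
    subst hy
    induction h with
    | base hv => exact hag _ hv
    | step G hG hk hv ih =>
      exact hN (G.keyVars, G.allVars) ⟨G, hG, rfl⟩ s1 h1 s2 h2 ih _ hv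

lemma mem_keycl_iff {q : List DBAtom} {F : DBAtom} {x : Var} :
    x ∈ keycl F q ↔ x ∈ qVars q ∧ InCl (q.erase F) F.keyVars x := by
  unfold keycl
  rw [Set.mem_setOf_eq, fdimp_iff]

lemma att_extend {p : List DBAtom} {F : DBAtom} {x y : Var}
    (hA : AttacksVar p F x) (hy : y ∉ keycl F p) (hadj : AdjIn p x y) :
    AttacksVar p F y := by
  obtain ⟨l, hcl, ⟨h, hh, hhn⟩, hlast, hch⟩ := hA
  have hlne : l ≠ [] := by intro e; rw [e] at hh; exact absurd hh (by simp)
  refine ⟨l ++ [y], ?_, ⟨h, ?_, hhn⟩, ?_, ?_⟩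
  · intro v hv
    rcases List.mem_append.mp hv with hv | hv
    · exact hcl v hv
    · rw [List.mem_singleton.mp hv]; exact hy
  · cases l with
    | nil => exact absurd rfl hlne
    | cons a t => simpa using hh
  · exact List.getLast?_concat
  · refine List.isChain_append.mpr ?_
    refine ⟨hch, List.isChain_singleton y, ?_⟩
    intro a ha b hb
    rw [hlast] at ha
    simp only [List.head?_cons, Option.mem_some_iff] at ha hb
    rw [← ha, ← hb]
    exact hadj

lemma att_of_chain {p : List DBAtom} {F : DBAtom} :
    ∀ (rest : List Var) (x : Var), AttacksVar p F x → List.Chain (AdjIn p) x rest →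
      (∀ v ∈ rest, v ∉ keycl F p) → ∀ y ∈ rest, AttacksVar p F y := by
  intro rest
  induction rest with
  | nil => intro x _ _ _ y hy; exact absurd hy List.not_mem_nil
  | cons b t ih =>
    intro x hx hch hcl y hy
    rcases List.chain_cons.mp hch with ⟨hadj, hch'⟩
    have hb : AttacksVar p F b := att_extend hx (hcl b List.mem_cons_self) hadj
    rcases List.mem_cons.mp hy with rfl | hy
    · exact hb
    · exact ih b hb hch' (fun v hv => hcl v (List.mem_cons_of_mem _ hv)) y hy

lemma witness_all {p : List DBAtom} {F : DBAtom} {l : List Var} {h : Var}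
    (hcl : ∀ v ∈ l, v ∉ keycl F p) (hh : l.head? = some h) (hhn : h ∈ F.notkeyVars)
    (hch : l.Chain' (AdjIn p)) : ∀ x ∈ l, AttacksVar p F x := by
  cases l with
  | nil => intro x hx; exact absurd hx List.not_mem_nil
  | cons a t =>
    simp only [List.head?_cons, Option.some.injEq] at hh
    subst hh
    have ha : AttacksVar p F a :=
      ⟨[a], by simpa using hcl a List.mem_cons_self, ⟨a, rfl, hhn⟩, rfl,
        List.isChain_singleton a⟩
    intro x hx
    rcases List.mem_cons.mp hx with rfl | hx
    · exact ha
    · exact att_of_chain t a ha hch (fun v hv => hcl v (List.mem_cons_of_mem _ hv)) x hx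

lemma chain_qvars {p : List DBAtom} :
    ∀ (t : List Var) (a : Var), a ∈ qVars p → List.Chain (AdjIn p) a t →
      ∀ x ∈ t, x ∈ qVars p := by
  intro t
  induction t with
  | nil => intro a _ _ x hx; exact absurd hx List.not_mem_nil
  | cons b s ih =>
    intro a ha hch x hx
    rcases List.chain_cons.mp hch with ⟨⟨G, hG, _, hbG⟩, hch'⟩
    have hb : b ∈ qVars p := (mem_qVars p b).mpr ⟨G, hG, hbG⟩
    rcases List.mem_cons.mp hx with rfl | hx
    · exact hb
    · exact ih b hb hch' x hx

lemma witness_qvars {p : List DBAtom} {l : List Var} {h : Var}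
    (hh : l.head? = some h) (hhq : h ∈ qVars p) (hch : l.Chain' (AdjIn p)) :
    ∀ x ∈ l, x ∈ qVars p := by
  cases l with
  | nil => intro x hx; exact absurd hx List.not_mem_nil
  | cons a t =>
    simp only [List.head?_cons, Option.some.injEq] at hh
    subst hh
    intro x hx
    rcases List.mem_cons.mp hx with rfl | hx
    · exact hhq
    · exact chain_qvars t a hhq hch x hx

lemma chain'_mono_mem {α : Type*} {R S : α → α → Prop} {P : α → Prop} :
    ∀ (l : List α), (∀ x ∈ l, P x) → (∀ a b, P a → P b → R a b → S a b) →
      l.Chain' R → l.Chain' S := by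
  intro l
  induction l with
  | nil => intro _ _ _; exact List.isChain_nil
  | cons a t ih =>
    intro hP himp hch
    cases t with
    | nil => exact List.isChain_singleton a
    | cons b s =>
      rcases List.isChain_cons_cons.mp hch with ⟨hab, hch'⟩
      exact List.isChain_cons_cons.mpr
        ⟨himp a b (hP a (by simp)) (hP b (by simp)) hab,
         ih (fun x hx => hP x (List.mem_cons_of_mem _ hx)) himp hch'⟩

end Stmt5Aux

section Stmt5Main

variable {q : List DBAtom} {θ : Assignment} {F : DBAtom}

lemma cl_lift (hsjf : SelfJoinFree q) (hF : F ∈ q) :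
    ∀ x, InCl (q.erase F) F.keyVars x → θ x = none →
      InCl ((applyQ θ q).erase (applyAtom θ F)) (applyAtom θ F).keyVars x := by
  intro x h
  induction h with
  | base hv =>
    intro hx
    exact InCl.base ((mem_keyVars_apply θ F _).mpr ⟨hv, hx⟩)
  | step G hG hk hv ih =>
    intro hx
    rcases (mem_erase_iff_of_sjf hsjf).mp hG with ⟨hne, hGq⟩
    refine InCl.step (applyAtom θ G)
      ((mem_apply_erase hsjf θ hF _).mpr ⟨G, hGq, hne, rfl⟩) ?_
      ((mem_allVars_apply θ G _).mpr ⟨hv, hx⟩)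
    intro k hkk
    rcases (mem_keyVars_apply θ G k).mp hkk with ⟨hk1, hk2⟩
    exact ih k hk1 hk2

lemma cl_hard (hsjf : SelfJoinFree q) (hF : F ∈ q)
    (hnoatt : ∀ y : Var, θ y ≠ none → ¬ AttacksVar q F y) :
    ∀ z, InCl ((applyQ θ q).erase (applyAtom θ F)) (applyAtom θ F).keyVars z →
      ¬ InCl (q.erase F) F.keyVars z → AttacksVar q F z → False := by
  intro z h
  induction h with
  | base hv =>
    intro hnc _
    exact hnc (InCl.base ((mem_keyVars_apply θ F _).mp hv).1)
  | step G' hG' hk hv ih =>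
    intro hnc hatt
    rcases (mem_apply_erase hsjf θ hF G').mp hG' with ⟨G, hGq, hGF, rfl⟩
    have hGe : G ∈ q.erase F := (mem_erase_iff_of_sjf hsjf).mpr ⟨hGF, hGq⟩
    have hz : _ ∈ G.allVars := ((mem_allVars_apply θ G _).mp hv).1
    by_cases hkey : ∀ k ∈ G.keyVars, InCl (q.erase F) F.keyVars k
    · exact hnc (InCl.step G hGe hkey hz)
    · push_neg at hkey
      obtain ⟨y, hyG, hyNcl⟩ := hkey
      have hyadj : AdjIn q _ y := ⟨G, hGq, hz, keyVars_subset_allVars G hyG⟩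
      have hynk : y ∉ keycl F q := fun hc => hyNcl (mem_keycl_iff.mp hc).2
      have hatty : AttacksVar q F y := att_extend hatt hynk hyadj
      cases hy : θ y with
      | some c => exact hnoatt y (by rw [hy]; simp) hatty
      | none =>
        exact ih y ((mem_keyVars_apply θ G y).mpr ⟨hyG, hy⟩) hyNcl hatty

end Stmt5Main

/-- If F attacks no variable of dom(θ), then for variables outside dom(θ),
attacks are preserved and reflected under the partial valuation θ. -/
theorem stmt5
    (q : List DBAtom) (hsjf : SelfJoinFree q)
    (θ : Assignment) (hdom : θ.Dom ⊆ ↑(qVars q))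
    (F : DBAtom) (hF : F ∈ q)
    (hnoatt : ∀ v ∈ θ.Dom, ¬ AttacksVar q F v) :
    ∀ v ∈ qVars q, v ∉ θ.Dom →
      (AttacksVar q F v ↔ AttacksVar (applyQ θ q) (applyAtom θ F) v) := by
  have hnoatt' : ∀ y : Var, θ y ≠ none → ¬ AttacksVar q F y := fun y hy => hnoatt y hy
  intro v hvq hvD
  constructor
  · rintro ⟨l, hcl, ⟨h, hh, hhn⟩, hlast, hch⟩
    have hattall := witness_all hcl hh hhn hch
    have hD : ∀ x ∈ l, θ x = none := by
      intro x hx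
      by_contra hne
      exact hnoatt' x hne (hattall x hx)
    have hhq : h ∈ qVars q := (mem_qVars q h).mpr ⟨F, hF, notkeyVars_subset_allVars F hhn⟩
    have hqv : ∀ x ∈ l, x ∈ qVars q := witness_qvars hh hhq hch
    have hncl : ∀ x ∈ l, ¬ InCl (q.erase F) F.keyVars x :=
      fun x hx hc => hcl x hx (mem_keycl_iff.mpr ⟨hqv x hx, hc⟩)
    have hmemh : h ∈ l := List.mem_of_mem_head? hh
    refine ⟨l, ?_, ⟨h, hh, (mem_notkeyVars_apply θ F h).mpr ⟨hhn, hD h hmemh⟩⟩, hlast, ?_⟩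
    · intro x hx hc
      rcases mem_keycl_iff.mp hc with ⟨_, hc2⟩
      exact cl_hard hsjf hF hnoatt' x hc2 (hncl x hx) (hattall x hx)
    · refine chain'_mono_mem l (fun x hx => hD x hx) ?_ hch
      rintro a b ha hb ⟨G, hG, haG, hbG⟩
      exact ⟨applyAtom θ G, List.mem_map.mpr ⟨G, hG, rfl⟩,
        (mem_allVars_apply θ G a).mpr ⟨haG, ha⟩, (mem_allVars_apply θ G b).mpr ⟨hbG, hb⟩⟩
  · rintro ⟨l, hcl, ⟨h, hh, hhn⟩, hlast, hch⟩
    rcases (mem_notkeyVars_apply θ F h).mp hhn with ⟨hhn', hhD⟩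
    have hhq' : h ∈ qVars (applyQ θ q) := (mem_qVars _ h).mpr
      ⟨applyAtom θ F, List.mem_map.mpr ⟨F, hF, rfl⟩, notkeyVars_subset_allVars _ hhn⟩
    have hqv' : ∀ x ∈ l, x ∈ qVars (applyQ θ q) := witness_qvars hh hhq' hch
    have hncl : ∀ x ∈ l, x ∉ keycl F q := by
      intro x hx hc
      rcases mem_keycl_iff.mp hc with ⟨_, hc2⟩
      have hxn : θ x = none := ((mem_qVars_apply θ q x).mp (hqv' x hx)).2
      exact hcl x hx (mem_keycl_iff.mpr ⟨hqv' x hx, cl_lift hsjf hF x hc2 hxn⟩)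
    refine ⟨l, hncl, ⟨h, hh, hhn'⟩, hlast, ?_⟩
    refine List.IsChain.imp ?_ hch
    rintro a b ⟨G', hG', haG, hbG⟩
    rcases List.mem_map.mp hG' with ⟨G, hG, rfl⟩
    exact ⟨G, hG, ((mem_allVars_apply θ G a).mp haG).1, ((mem_allVars_apply θ G b).mp hbG).1⟩
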